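/- Suppose P satisfies (C1), (C2), (C3), and (C4). Then for any integers a and c, ℙ^a-almost surely, lim_{x→∞} (1/x) Σ_{k=c}^{x} N_k = 1/v, where the limit is +∞ if v = 0. -/

import Mathlib

open MeasureTheory ProbabilityTheory Filter
open scoped ENNReal NNReal Classical

noncomputable section

/-- An environment on `ℤ`: a candidate family of transition probabilities. -/
abbrev Env : Type := ℤ → ℤ → ℝ

/-- `ω` is a proper environment: each row is a probability vector on `ℤ`. -/
def IsEnv (ω : Env) : Prop :=
  (∀ x y, 0 ≤ ω x y) ∧ ∀ x, HasSum (ω x) 1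

/-- `μ` is the quenched law `P_ω^x` of the Markov chain in environment `ω` started at `x`:
it is the probability measure on paths whose cylinder probabilities are the products of the
transition probabilities `ω`. -/
def IsQuenched (ω : Env) (x : ℤ) (μ : Measure (ℕ → ℤ)) : Prop :=
  IsProbabilityMeasure μ ∧
    ∀ (n : ℕ) (f : ℕ → ℤ),
      μ {X | ∀ i ≤ n, X i = f i} =
        ENNReal.ofReal ((if f 0 = x then 1 else 0) *
          ∏ i ∈ Finset.range n, ω (f i) (f (i + 1)))

/-- `Pq` assigns to every proper environment `ω` and starting point `x` the quenched law
`P_ω^x`. -/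
def IsQuenchedFamily (Pq : Env → ℤ → Measure (ℕ → ℤ)) : Prop :=
  ∀ ω, IsEnv ω → ∀ x, IsQuenched ω x (Pq ω x)

/-- The row of the environment at site `x`, as a function of the increment. -/
def rowOf (x : ℤ) (ω : Env) : ℤ → ℝ := fun i => ω x (x + i)

/-- Condition (C1): the rows `(ω(x, x+·))_{x ∈ ℤ}` are i.i.d. under `P`
(and `P` is a probability measure on proper environments). -/
def CondIID (P : Measure Env) : Prop :=
  IsProbabilityMeasure P ∧ (∀ᵐ ω ∂P, IsEnv ω) ∧
    iIndepFun rowOf P ∧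
    ∀ x : ℤ, P.map (rowOf x) = P.map (rowOf 0)

/-- The Markov chain given by `ω` is irreducible. -/
def IrreducibleEnv (ω : Env) : Prop :=
  ∀ x y : ℤ, ∃ (n : ℕ) (f : ℕ → ℤ), f 0 = x ∧ f n = y ∧ ∀ i < n, 0 < ω (f i) (f (i + 1))

/-- Condition (C2). -/
def CondIrred (P : Measure Env) : Prop := ∀ᵐ ω ∂P, IrreducibleEnv ω

/-- Condition (C3): jumps lie in `[-L, R]`. -/
def CondBdd (L R : ℕ) (P : Measure Env) : Prop :=
  ∀ᵐ ω ∂P, ∀ a b : ℤ, (b - a < -(L : ℤ) ∨ (R : ℤ) < b - a) → ω a b = 0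

/-- Condition (C4): for `P`-a.e. `ω`, the walk started at `0` tends to `+∞`, `P_ω^0`-a.s. -/
def CondTrans (P : Measure Env) (Pq : Env → ℤ → Measure (ℕ → ℤ)) : Prop :=
  ∀ᵐ ω ∂P, (Pq ω 0) {X | Tendsto X atTop atTop} = 1

/-- `v` is the annealed a.s. limiting velocity of the walk started at `0`. -/
def ASLimVelocity (P : Measure Env) (Pq : Env → ℤ → Measure (ℕ → ℤ)) (v : ℝ) : Prop :=
  ∫⁻ ω, (Pq ω 0) {X | ¬ Tendsto (fun n : ℕ => (X n : ℝ) / (n : ℝ)) atTop (nhds v)} ∂P = 0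

/-- `N_x`: number of visits of the path `X` to the site `x`. -/
def Ncount (x : ℤ) (X : ℕ → ℤ) : ℝ≥0∞ := ∑' n : ℕ, if X n = x then 1 else 0

/-- `N_x^S`: number of visits to `x` strictly before the first exit from `S`. -/
def NcountIn (S : Set ℤ) (x : ℤ) (X : ℕ → ℤ) : ℝ≥0∞ :=
  ∑' n : ℕ, if X n = x ∧ ∀ m ≤ n, X m ∈ S then 1 else 0

/-- `N_{x,y}`: number of visits to `x` whose most recent preceding visit to `{x,y}` pattern
has the last visit to `y` after the last visit to `x` (number of trips from `y` to `x`). -/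
def Ntrip (x y : ℤ) (X : ℕ → ℤ) : ℝ≥0∞ :=
  ∑' n : ℕ, if X n = x ∧ ∃ j < n, X j = y ∧ ∀ k < n, X k = x → k < j then 1 else 0

/-- `N'_{x,y}`: number of leftward crossings of `[x,y]`. -/
def NtripCross (x y : ℤ) (X : ℕ → ℤ) : ℝ≥0∞ :=
  ∑' n : ℕ, if X n ≤ x ∧ ∃ j < n, y ≤ X j ∧ ∀ k < n, X k ≤ x → k < j then 1 else 0

/-- `H_{≥ z}`: hitting time of `[z, ∞)`, as an extended nonnegative real. -/
def Hge (z : ℤ) (X : ℕ → ℤ) : ℝ≥0∞ := sInf ((fun n : ℕ => (n : ℝ≥0∞)) '' {n | z ≤ X n})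

/-- `H̃_x`: first positive hitting time of `x`, as an extended nonnegative real. -/
def Hret (x : ℤ) (X : ℕ → ℤ) : ℝ≥0∞ :=
  sInf ((fun n : ℕ => (n : ℝ≥0∞)) '' {n | 0 < n ∧ X n = x})

/-- The Dirichlet distribution with parameters `(a j)_{j ∈ J}`, realized as the law of a
normalized vector of independent Gamma random variables, viewed as a measure on `ℤ → ℝ`
(coordinates outside `J` are `0`). -/
def dirichletRow (J : Finset ℤ) (a : ℤ → ℝ) : Measure (ℤ → ℝ) :=
  Measure.map (fun g : J → ℝ => fun i : ℤ =>
      if h : i ∈ J then g ⟨i, h⟩ / (∑ j : J, g j) else 0)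
    (Measure.pi fun j : J => gammaMeasure (a (j : ℤ)) 1)

/-- The support of the weights. -/
def suppSet (L R : ℕ) (α : ℤ → ℝ) : Finset ℤ :=
  (Finset.Icc (-(L : ℤ)) (R : ℤ)).filter fun i => 0 < α i

/-- `P = P_𝒢`: the rows are i.i.d. Dirichlet with parameters `(α_i)_{i : α_i > 0}`. -/
def IsDirichletLaw (L R : ℕ) (α : ℤ → ℝ) (P : Measure Env) : Prop :=
  IsProbabilityMeasure P ∧ (∀ᵐ ω ∂P, IsEnv ω) ∧
    iIndepFun rowOf P ∧
    ∀ x : ℤ, P.map (rowOf x) = dirichletRow (suppSet L R α) α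

/-- `d⁺ = Σ_{i=1}^R i α_i`. -/
def dplus (R : ℕ) (α : ℤ → ℝ) : ℝ := ∑ i ∈ Finset.Icc (1 : ℤ) (R : ℤ), (i : ℝ) * α i

/-- `d⁻ = Σ_{i=-L}^{-1} |i| α_i`. -/
def dminus (L : ℕ) (α : ℤ → ℝ) : ℝ :=
  ∑ i ∈ Finset.Icc (-(L : ℤ)) (-1 : ℤ), |(i : ℝ)| * α i

/-- `κ₁ = d⁺ - d⁻`. -/
def kappa1 (L R : ℕ) (α : ℤ → ℝ) : ℝ := dplus R α - dminus L α

/-- `S` is finite, nonempty and strongly connected in the graph `𝒢`. -/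
def IsSC (α : ℤ → ℝ) (S : Finset ℤ) : Prop :=
  S.Nonempty ∧ ∀ x ∈ S, ∀ y ∈ S, ∃ (n : ℕ) (f : ℕ → ℤ),
    f 0 = x ∧ f n = y ∧ (∀ i ≤ n, f i ∈ S) ∧ ∀ i < n, 0 < α (f (i + 1) - f i)

/-- `β_S`: total weight of edges of `𝒢` exiting `S`. -/
def betaExit (L R : ℕ) (α : ℤ → ℝ) (S : Finset ℤ) : ℝ :=
  ∑ x ∈ S, ∑ i ∈ Finset.Icc (-(L : ℤ)) (R : ℤ), if x + i ∉ S then α i else 0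

/-- `κ₀`: infimum of `β_S` over finite nonempty strongly connected `S`. -/
def kappa0 (L R : ℕ) (α : ℤ → ℝ) : ℝ :=
  sInf {b : ℝ | ∃ S : Finset ℤ, IsSC α S ∧ betaExit L R α S = b}

/-- Regeneration times `τ_k`. -/
def regenTime (X : ℕ → ℤ) : ℕ → ℕ
  | 0 => 0
  | k + 1 => sInf {n : ℕ | regenTime X k < n ∧ (∀ j < n, X j < X n) ∧ ∀ j, n < j → X n ≤ X j}

/-- Cascades: one (stopped) walk attached to each site of `ℤ`. -/
abbrev Casc : Type := ℤ → ℕ → ℤ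

/-- The index `k` of the level `((k-1)R, kR]` containing `x`, i.e. `⌈x/R⌉`. -/
def levelIdx (R : ℕ) (x : ℤ) : ℤ := -(Int.ediv (-x) (R : ℤ))

/-- First hitting time of the level of `a + R` by the path `Y`. -/
def levelHit (R : ℕ) (a : ℤ) (Y : ℕ → ℤ) : ℕ :=
  sInf {n : ℕ | levelIdx R (Y n) = levelIdx R (a + (R : ℤ))}

/-- The path `Y` stopped upon first reaching the level of `a + R`. -/
def stopWalk (R : ℕ) (a : ℤ) (Y : ℕ → ℤ) : ℕ → ℤ := fun n => Y (min n (levelHit R a Y))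

/-- `μ` is the law of the cascade in the environment `ω`: independent coordinates, the
coordinate at `a` being a walk of law `P_ω^a` stopped upon first reaching the level of `a+R`. -/
def IsCascadeLaw (R : ℕ) (Pq : Env → ℤ → Measure (ℕ → ℤ)) (ω : Env) (μ : Measure Casc) :
    Prop :=
  IsProbabilityMeasure μ ∧
    iIndepFun (fun a (c : Casc) => c a) μ ∧
    ∀ a : ℤ, μ.map (fun c => c a) = (Pq ω a).map (stopWalk R a)

/-- Bookkeeping for concatenation of the cascade walks: starting site and starting time of the
`k`-th stopped walk entering the concatenated walk from `a`. -/
def concatData (R : ℕ) (c : Casc) (a : ℤ) : ℕ → ℤ × ℕ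
  | 0 => (a, 0)
  | k + 1 =>
      let p := concatData R c a k
      (c p.1 (levelHit R p.1 (c p.1)), p.2 + levelHit R p.1 (c p.1))

/-- The concatenated walk `X^a` of the cascade `c`. -/
def Xconcat (R : ℕ) (c : Casc) (a : ℤ) (n : ℕ) : ℤ :=
  c (concatData R c a (sInf {k : ℕ | n < (concatData R c a (k + 1)).2})).1
    (n - (concatData R c a (sInf {k : ℕ | n < (concatData R c a (k + 1)).2})).2)

/-- The coalescence event `C_x`: every walk of the cascade started in the level of `x - R`
first hits the level of `x` at `x`. -/
def Coal (R : ℕ) (c : Casc) (x : ℤ) : Prop :=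
  ∀ a : ℤ, levelIdx R a = levelIdx R (x - (R : ℤ)) → c a (levelHit R a (c a)) = x

/-- The event `ℰ₁`: all concatenated walks tend to `+∞`, all jumps lie in `[-L, R]`, and
coalescence events occur at infinitely many sites to the left and to the right of `0`. -/
def CascEvent (L R : ℕ) (c : Casc) : Prop :=
  (∀ a : ℤ, Tendsto (Xconcat R c a) atTop atTop) ∧
    (∀ (a : ℤ) (n : ℕ), -(L : ℤ) ≤ c a (n + 1) - c a n ∧ c a (n + 1) - c a n ≤ (R : ℤ)) ∧
    (∀ M : ℤ, ∃ x : ℤ, x < M ∧ Coal R c x) ∧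
    (∀ M : ℤ, ∃ x : ℤ, M < x ∧ Coal R c x)

/-- `N̄_0`: the time spent at `0` by the bi-infinite walk `X̄`, realized as the limit (here:
`limsup`) as `a → -∞` of the time spent at `0` by the concatenated walk `X^a`. -/
def NbarZero (R : ℕ) (c : Casc) : ℝ≥0∞ :=
  Filter.limsup (fun a : ℤ => Ncount 0 (Xconcat R c a)) Filter.atBot

end


namespace OccLLN

open MeasureTheory ProbabilityTheory Filter MeasurableSpace
open scoped ENNReal

/-! ### Basic maps and measurability -/

/-- Shift of an environment. -/
def shiftEnv (a : ℤ) (ω : Env) : Env := fun x y => ω (x + a) (y + a)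

/-- Shift of a path. -/
def shiftPath (a : ℤ) (X : ℕ → ℤ) : ℕ → ℤ := fun n => X n - a

lemma measurableSet_int (s : Set ℤ) : MeasurableSet s := MeasurableSpace.measurableSet_top

lemma measurable_rowOf (x : ℤ) : Measurable (rowOf x) :=
  measurable_pi_lambda _ fun i => (measurable_pi_apply (x + i)).comp (measurable_pi_apply x)

lemma measurable_shiftEnv (a : ℤ) : Measurable (shiftEnv a) :=
  measurable_pi_lambda _ fun x => measurable_pi_lambda _ fun y =>
    (measurable_pi_apply (y + a)).comp (measurable_pi_apply (x + a))

lemma measurable_shiftPath (a : ℤ) : Measurable (shiftPath a) := by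
  apply measurable_pi_lambda
  intro n
  have h1 : Measurable fun z : ℤ => z - a := fun s _ => measurableSet_int _
  exact h1.comp (measurable_pi_apply n)

lemma shiftEnv_shiftEnv (a : ℤ) (ω : Env) : shiftEnv a (shiftEnv (-a) ω) = ω := by
  funext x y; simp [shiftEnv]

lemma rowOf_shiftEnv (a x : ℤ) (ω : Env) : rowOf x (shiftEnv a ω) = rowOf (x + a) ω := by
  funext i
  show ω (x + a) (x + i + a) = ω (x + a) (x + a + i)
  ring_nf

lemma isEnv_shiftEnv {ω : Env} (h : IsEnv ω) (a : ℤ) : IsEnv (shiftEnv a ω) := by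
  refine ⟨fun x y => h.1 _ _, fun x => ?_⟩
  have := h.2 (x + a)
  have h2 : HasSum ((ω (x + a)) ∘ (Equiv.addRight a)) 1 := (Equiv.addRight a).hasSum_iff.mpr this
  exact h2

/-! ### Cylinders in path space -/

lemma measurableSet_cyl (n : ℕ) (f : ℕ → ℤ) :
    MeasurableSet {X : ℕ → ℤ | ∀ i ≤ n, X i = f i} := by
  have : {X : ℕ → ℤ | ∀ i ≤ n, X i = f i} =
      ⋂ (i : ℕ) (_ : i ≤ n), (fun X : ℕ → ℤ => X i) ⁻¹' {f i} := by
    ext X; simp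
  rw [this]
  exact MeasurableSet.iInter fun i => MeasurableSet.iInter fun _ =>
    (measurable_pi_apply i) (measurableSet_int _)

/-- Cylinder π-system on path space. -/
def pathCyls : Set (Set (ℕ → ℤ)) :=
  insert ∅ {S | ∃ (n : ℕ) (f : ℕ → ℤ), S = {X | ∀ i ≤ n, X i = f i}}

lemma cyl_inter {n m : ℕ} {f g : ℕ → ℤ} (hnm : n ≤ m)
    (hne : ({X : ℕ → ℤ | ∀ i ≤ n, X i = f i} ∩ {X | ∀ i ≤ m, X i = g i}).Nonempty) :
    {X : ℕ → ℤ | ∀ i ≤ n, X i = f i} ∩ {X | ∀ i ≤ m, X i = g i}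
      = {X | ∀ i ≤ m, X i = g i} := by
  obtain ⟨Z, hZf, hZg⟩ := hne
  refine Set.inter_eq_right.mpr fun Y hY i hi => ?_
  rw [hY i (le_trans hi hnm), ← hZg i (le_trans hi hnm)]
  exact hZf i hi

lemma isPiSystem_pathCyls : IsPiSystem pathCyls := by
  rintro S hS T hT hST
  simp only [pathCyls, Set.mem_insert_iff, Set.mem_setOf_eq] at hS hT ⊢
  rcases hS with rfl | ⟨n, f, rfl⟩
  · exact absurd hST (by simp)
  rcases hT with rfl | ⟨m, g, rfl⟩
  · exact absurd hST (by simp)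
  rcases le_total n m with h | h
  · exact Or.inr ⟨m, g, cyl_inter h hST⟩
  · refine Or.inr ⟨n, f, ?_⟩
    rw [Set.inter_comm]
    exact cyl_inter h (by rwa [Set.inter_comm] at hST)

lemma pathPi_gen :
    (inferInstance : MeasurableSpace (ℕ → ℤ)) = MeasurableSpace.generateFrom pathCyls := by
  refine le_antisymm ?_ (MeasurableSpace.generateFrom_le ?_)
  · -- pi ≤ generateFrom
    have heval : ∀ i : ℕ,
        @Measurable _ _ (MeasurableSpace.generateFrom pathCyls) ⊤ (fun X : ℕ → ℤ => X i) := by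
      intro i s _
      have hs : (fun X : ℕ → ℤ => X i) ⁻¹' s = ⋃ z ∈ s, {X : ℕ → ℤ | X i = z} := by
        ext X; simp
      rw [hs]
      refine MeasurableSet.biUnion (Set.to_countable s) fun z _ => ?_
      have hz : {X : ℕ → ℤ | X i = z} =
          ⋃ (w : Fin (i + 1) → ℤ) (_ : w ⟨i, i.lt_succ_self⟩ = z),
            {X : ℕ → ℤ | ∀ j ≤ i, X j = (fun j => if h : j < i + 1 then w ⟨j, h⟩ else 0) j} := by
        ext X
        simp only [Set.mem_iUnion, Set.mem_setOf_eq]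
        constructor
        · intro hXi
          refine ⟨fun j => X j, hXi, fun j hj => ?_⟩
          rw [dif_pos (Nat.lt_succ_of_le hj)]
        · rintro ⟨w, hwz, hw⟩
          have h1 := hw i le_rfl
          rw [dif_pos (Nat.lt_succ_self i)] at h1
          rw [h1]; exact hwz
      rw [hz]
      refine MeasurableSet.iUnion fun w => MeasurableSet.iUnion fun _ => ?_
      exact measurableSet_generateFrom (Or.inr ⟨i, _, rfl⟩)
    exact iSup_le fun i => measurable_iff_comap_le.mp (heval i)
  · rintro S hS
    rcases hS with rfl | ⟨n, f, rfl⟩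
    · exact MeasurableSet.empty
    · exact measurableSet_cyl n f

/-! ### Uniqueness of the quenched law and shift identification -/

lemma quenched_unique {ω : Env} {x : ℤ} {μ ν : Measure (ℕ → ℤ)}
    (hμ : IsQuenched ω x μ) (hν : IsQuenched ω x ν) : μ = ν := by
  haveI := hμ.1
  haveI := hν.1
  refine MeasureTheory.ext_of_generate_finite pathCyls pathPi_gen isPiSystem_pathCyls ?_ (by simp)
  rintro S hS
  rcases hS with rfl | ⟨n, f, rfl⟩
  · simp
  · rw [hμ.2 n f, hν.2 n f]

lemma quenched_shift {Pq : Env → ℤ → Measure (ℕ → ℤ)} (hPq : IsQuenchedFamily Pq)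
    {ω : Env} (hEnv : IsEnv ω) (a : ℤ) :
    (Pq ω a).map (shiftPath a) = Pq (shiftEnv a ω) 0 := by
  have hq := hPq ω hEnv a
  haveI := hq.1
  have hq' := hPq (shiftEnv a ω) (isEnv_shiftEnv hEnv a) 0
  refine quenched_unique ?_ hq'
  constructor
  · exact Measure.isProbabilityMeasure_map (measurable_shiftPath a).aemeasurable
  · intro n f
    rw [Measure.map_apply (measurable_shiftPath a) (measurableSet_cyl n f)]
    have hpre : shiftPath a ⁻¹' {X | ∀ i ≤ n, X i = f i}
        = {X | ∀ i ≤ n, X i = (fun i => f i + a) i} := by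
      ext X
      simp only [Set.mem_preimage, Set.mem_setOf_eq, shiftPath]
      exact forall₂_congr fun i _ => sub_eq_iff_eq_add
    rw [hpre, hq.2 n (fun i => f i + a)]
    have hiff : (f 0 + a = a) ↔ (f 0 = 0) := by omega
    congr 1
    rw [if_congr hiff rfl rfl]
    rfl

/-! ### The environment π-system and shift invariance of P -/

/-- Finite-dimensional row cylinders in environment space. -/
def envCyls : Set (Set Env) :=
  {S | ∃ (s : Finset ℤ) (A : ℤ → Set (ℤ → ℝ)),
    (∀ x ∈ s, MeasurableSet (A x)) ∧ S = ⋂ x ∈ s, rowOf x ⁻¹' A x}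

lemma isPiSystem_envCyls : IsPiSystem envCyls := by
  rintro S ⟨s, A, hA, rfl⟩ T ⟨t, B, hB, rfl⟩ -
  refine ⟨s ∪ t, fun x => (if x ∈ s then A x else Set.univ) ∩ (if x ∈ t then B x else Set.univ),
    ?_, ?_⟩
  · intro x _
    refine MeasurableSet.inter ?_ ?_ <;> split_ifs with h
    · exact hA x h
    · exact MeasurableSet.univ
    · exact hB x h
    · exact MeasurableSet.univ
  · ext ω
    simp only [Set.mem_inter_iff, Set.mem_iInter, Set.mem_preimage, Finset.mem_union]
    constructor
    · rintro ⟨h1, h2⟩ x hx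
      constructor <;> split_ifs with h
      · exact h1 x h
      · trivial
      · exact h2 x h
      · trivial
    · intro h
      constructor
      · intro x hx
        have := (h x (Or.inl hx)).1
        rwa [if_pos hx] at this
      · intro x hx
        have := (h x (Or.inr hx)).2
        rwa [if_pos hx] at this

lemma measurableSet_envCyl {s : Finset ℤ} {A : ℤ → Set (ℤ → ℝ)}
    (hA : ∀ x ∈ s, MeasurableSet (A x)) :
    MeasurableSet (⋂ x ∈ s, rowOf x ⁻¹' A x) :=
  MeasurableSet.biInter s.countable_toSet fun x hx => measurable_rowOf x (hA x hx)

lemma envPi_gen :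
    (inferInstance : MeasurableSpace Env) = MeasurableSpace.generateFrom envCyls := by
  refine le_antisymm ?_ (MeasurableSpace.generateFrom_le ?_)
  · have hrow : ∀ x : ℤ,
        @Measurable _ _ (MeasurableSpace.generateFrom envCyls) _ (rowOf x) := by
      intro x A hA
      refine measurableSet_generateFrom ⟨{x}, fun _ => A, fun _ _ => hA, ?_⟩
      simp
    have heval : ∀ x : ℤ,
        @Measurable _ _ (MeasurableSpace.generateFrom envCyls) _ (fun ω : Env => ω x) := by
      intro x
      rw [@measurable_pi_iff]
      intro y
      have : (fun ω : Env => ω x y) = (fun r : ℤ → ℝ => r (y - x)) ∘ rowOf x := by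
        funext ω
        show ω x y = ω x (x + (y - x))
        congr 1
        ring
      rw [this]
      exact (measurable_pi_apply (y - x)).comp (hrow x)
    exact iSup_le fun x => measurable_iff_comap_le.mp (heval x)
  · rintro S ⟨s, A, hA, rfl⟩
    exact measurableSet_envCyl hA

lemma mapShiftEnv {P : Measure Env} (hC1 : CondIID P) (a : ℤ) :
    Measure.map (shiftEnv a) P = P := by
  obtain ⟨hprob, -, hind, hmarg⟩ := hC1
  haveI := hprob
  haveI : IsProbabilityMeasure (P.map (shiftEnv a)) :=
    Measure.isProbabilityMeasure_map (measurable_shiftEnv a).aemeasurable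
  have hmarg' : ∀ (x : ℤ) (A : Set (ℤ → ℝ)), MeasurableSet A →
      P (rowOf x ⁻¹' A) = P (rowOf 0 ⁻¹' A) := by
    intro x A hA
    rw [← Measure.map_apply (measurable_rowOf x) hA, ← Measure.map_apply (measurable_rowOf 0) hA,
      hmarg x]
  have hind' := iIndepFun_iff_measure_inter_preimage_eq_mul.mp hind
  refine MeasureTheory.ext_of_generate_finite envCyls envPi_gen isPiSystem_envCyls ?_ (by simp)
  rintro S ⟨s, A, hA, rfl⟩
  rw [Measure.map_apply (measurable_shiftEnv a) (measurableSet_envCyl hA)]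
  have hpre : shiftEnv a ⁻¹' (⋂ x ∈ s, rowOf x ⁻¹' A x)
      = ⋂ y ∈ s.image (· + a), rowOf y ⁻¹' A (y - a) := by
    ext ω
    simp only [Set.mem_preimage, Set.mem_iInter, Finset.mem_image]
    constructor
    · rintro h y ⟨x, hx, rfl⟩
      have := h x hx
      rw [rowOf_shiftEnv] at this
      simpa using this
    · intro h x hx
      have := h (x + a) ⟨x, hx, rfl⟩
      rw [rowOf_shiftEnv]
      simpa using this
  rw [hpre]
  have hA' : ∀ y ∈ s.image (· + a), MeasurableSet ((fun y => A (y - a)) y) := by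
    intro y hy
    obtain ⟨x, hx, rfl⟩ := Finset.mem_image.mp hy
    simpa using hA x hx
  rw [hind' (s.image (· + a)) hA', hind' s hA]
  rw [Finset.prod_image (fun x _ y _ h => by omega)]
  refine Finset.prod_congr rfl fun x hx => ?_
  simp only [add_sub_cancel_right]
  rw [hmarg' (x + a) (A x) (hA x hx), hmarg' x (A x) (hA x hx)]

/-! ### Pathwise occupation-time law of large numbers -/

lemma pathwise (c : ℤ) (v : ℝ) (X : ℕ → ℤ)
    (hX : Tendsto X atTop atTop)
    (hvel : Tendsto (fun n : ℕ => (X n : ℝ) / (n : ℝ)) atTop (nhds v)) :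
    Tendsto (fun x : ℕ => (∑ k ∈ Finset.Icc c (x : ℤ), Ncount k X) / (x : ℝ≥0∞)) atTop
      (nhds (ENNReal.ofReal v)⁻¹) := by
  classical
  -- finiteness of sublevel visit sets
  have hfinB : ∀ t : ℤ, {n : ℕ | X n ≤ t}.Finite := by
    intro t
    obtain ⟨N, hN⟩ := eventually_atTop.mp (hX.eventually (eventually_gt_atTop t))
    refine Set.Finite.subset (Set.finite_Iio N) fun n hn => ?_
    simp only [Set.mem_setOf_eq] at hn
    by_contra hcon
    simp only [Set.mem_Iio, not_lt] at hcon
    exact absurd (hN n hcon) (not_lt.mpr hn)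
  have hfinC : ∀ x : ℕ, {n : ℕ | c ≤ X n ∧ X n ≤ (x : ℤ)}.Finite :=
    fun x => (hfinB x).subset fun n hn => hn.2
  set m : ℕ → ℕ := fun x => (hfinC x).toFinset.card with hm
  -- rewrite the numerator as a cardinality
  have hnum : ∀ x : ℕ, (∑ k ∈ Finset.Icc c (x : ℤ), Ncount k X) = (m x : ℝ≥0∞) := by
    intro x
    have h0 : (∑ k ∈ Finset.Icc c (x : ℤ), Ncount k X)
        = ∑' n : ℕ, ∑ k ∈ Finset.Icc c (x : ℤ), (if X n = k then (1 : ℝ≥0∞) else 0) := by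
      rw [Summable.tsum_finsetSum (fun i _ => ENNReal.summable)]
      rfl
    rw [h0, tsum_eq_sum (s := (hfinC x).toFinset) ?_]
    · calc (∑ n ∈ (hfinC x).toFinset, ∑ k ∈ Finset.Icc c (x : ℤ), if X n = k then (1:ℝ≥0∞) else 0)
          = ∑ n ∈ (hfinC x).toFinset, (1:ℝ≥0∞) := by
            refine Finset.sum_congr rfl fun n hn => ?_
            rw [Finset.sum_ite_eq, if_pos]
            rw [Set.Finite.mem_toFinset] at hn
            exact Finset.mem_Icc.mpr hn
      _ = (m x : ℝ≥0∞) := by simp [hm]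
    · intro n hn
      rw [Set.Finite.mem_toFinset] at hn
      rw [Finset.sum_ite_eq, if_neg]
      rwa [Finset.mem_Icc]
  have hgoal_eq : (fun x : ℕ => (∑ k ∈ Finset.Icc c (x : ℤ), Ncount k X) / (x : ℝ≥0∞))
      = fun x : ℕ => (m x : ℝ≥0∞) / (x : ℝ≥0∞) := funext fun x => by rw [hnum x]
  rw [hgoal_eq]
  -- the finitely many visits to the left of c
  have hfinD : {n : ℕ | X n < c}.Finite :=
    (hfinB (c - 1)).subset fun n hn => by
      simp only [Set.mem_setOf_eq] at *; omega
  set d : ℕ := hfinD.toFinset.card with hd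
  -- first passage above level x
  have hne : ∀ x : ℕ, {n : ℕ | (x : ℤ) < X n}.Nonempty := by
    intro x
    obtain ⟨N, hN⟩ := eventually_atTop.mp (hX.eventually (eventually_gt_atTop (x : ℤ)))
    exact ⟨N, hN N le_rfl⟩
  set Hz : ℕ → ℕ := fun x => sInf {n : ℕ | (x : ℤ) < X n} with hHz
  have hHzmem : ∀ x : ℕ, (x : ℤ) < X (Hz x) := fun x => Nat.sInf_mem (hne x)
  have hHzlt : ∀ x n, n < Hz x → X n ≤ (x : ℤ) := fun x n hn =>
    not_lt.mp (Nat.notMem_of_lt_sInf hn)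
  have hHztop : Tendsto Hz atTop atTop := by
    rw [tendsto_atTop_atTop]
    intro N
    have hbdd : ∃ M : ℤ, ∀ n < N, X n ≤ M := by
      obtain ⟨M, hM⟩ := ((Set.finite_Iio N).image X).bddAbove
      exact ⟨M, fun n hn => hM (Set.mem_image_of_mem X hn)⟩
    obtain ⟨M, hM⟩ := hbdd
    refine ⟨M.toNat, fun x hx => ?_⟩
    refine le_csInf (hne x) fun b hb => ?_
    by_contra h
    push_neg at h
    have h1 : X b ≤ M := hM b h
    have h2 : (x : ℤ) < X b := hb
    have h3 : M ≤ (x : ℤ) := le_trans (Int.self_le_toNat M) (by exact_mod_cast hx)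
    omega
  -- lower bound on the count
  have hlow : ∀ x : ℕ, Hz x ≤ m x + d := by
    intro x
    have hsub : Finset.range (Hz x) \ hfinD.toFinset ⊆ (hfinC x).toFinset := by
      intro n hn
      rw [Finset.mem_sdiff] at hn
      obtain ⟨h1, h2⟩ := hn
      rw [Finset.mem_range] at h1
      rw [Set.Finite.mem_toFinset] at h2
      rw [Set.Finite.mem_toFinset]
      exact ⟨not_lt.mp (fun hcc => h2 hcc), hHzlt x n h1⟩
    calc Hz x = (Finset.range (Hz x)).card := (Finset.card_range _).symm
      _ ≤ (Finset.range (Hz x) \ hfinD.toFinset).card + hfinD.toFinset.card :=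
          Finset.card_le_card_sdiff_add_card
      _ ≤ m x + d := add_le_add (Finset.card_le_card hsub) le_rfl
  -- last visit below level x
  set x₁ : ℕ := (X 0).toNat with hx₁
  have hMne : ∀ x : ℕ, x₁ ≤ x → {n : ℕ | X n ≤ (x : ℤ)}.Nonempty := by
    intro x hx
    exact ⟨0, show X 0 ≤ (x : ℤ) from le_trans (Int.self_le_toNat _) (by exact_mod_cast hx)⟩
  set Mx : ℕ → ℕ := fun x => sSup {n : ℕ | X n ≤ (x : ℤ)} with hMx
  have hMmem : ∀ x : ℕ, x₁ ≤ x → X (Mx x) ≤ (x : ℤ) := fun x hx =>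
    Nat.sSup_mem (hMne x hx) ((hfinB x).bddAbove)
  have hMub : ∀ (x : ℕ) (n : ℕ), X n ≤ (x : ℤ) → n ≤ Mx x := fun x n hn =>
    le_csSup ((hfinB x).bddAbove) hn
  have hMtop : Tendsto Mx atTop atTop := by
    rw [tendsto_atTop_atTop]
    intro N
    refine ⟨(X N).toNat, fun x hx => ?_⟩
    exact hMub x N (le_trans (Int.self_le_toNat _) (by exact_mod_cast hx))
  have hupcard : ∀ x : ℕ, m x ≤ Mx x + 1 := by
    intro x
    have hsub : (hfinC x).toFinset ⊆ Finset.range (Mx x + 1) := by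
      intro n hn
      rw [Set.Finite.mem_toFinset] at hn
      rw [Finset.mem_range, Nat.lt_succ_iff]
      exact hMub x n hn.2
    simpa using Finset.card_le_card hsub
  rcases le_or_gt v 0 with hv0 | hv0
  · -- zero or negative speed : the limit is ∞
    rw [ENNReal.ofReal_eq_zero.mpr hv0, ENNReal.inv_zero]
    rw [ENNReal.tendsto_nhds_top_iff_nat]
    intro K
    have hδ : (0 : ℝ) < 1 / (K + 2) := by positivity
    have hsmall : ∀ᶠ n in atTop, (X n : ℝ) / n < 1 / (K + 2) :=
      hvel.eventually_lt_const (lt_of_le_of_lt hv0 hδ)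
    obtain ⟨N, hN⟩ := eventually_atTop.mp hsmall
    have hXn : ∀ n, N ≤ n → 1 ≤ n → (X n : ℝ) * (K + 2) < n := by
      intro n h1 h2
      have h3 := hN n h1
      have hn0 : (0 : ℝ) < n := by exact_mod_cast h2
      rw [div_lt_div_iff₀ hn0 (by positivity : (0:ℝ) < (K:ℝ) + 2)] at h3
      linarith
    filter_upwards [hHztop.eventually (eventually_ge_atTop N),
      hHztop.eventually (eventually_ge_atTop 1), eventually_ge_atTop (d + 1)]
      with x hx1 hx2 hx3
    have hr1 : (x : ℝ) < X (Hz x) := by exact_mod_cast hHzmem x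
    have hr2 : (X (Hz x) : ℝ) * (K + 2) < Hz x := hXn (Hz x) hx1 hx2
    have hx0 : (0 : ℝ) ≤ (x : ℝ) := Nat.cast_nonneg x
    have hr3 : ((K : ℝ) + 2) * x < Hz x := by nlinarith
    have hnat : (K + 2) * x < Hz x := by exact_mod_cast hr3
    have hdx : d ≤ x := by omega
    have hmlow : K * x < m x := by
      have h6 : K * x + x + x = (K + 2) * x := by ring
      have h8 : K * x + x + x < m x + d := by
        rw [h6]; exact lt_of_lt_of_le hnat (hlow x)
      generalize K * x = q at h8 ⊢
      omega
    have hx0' : (x : ℝ≥0∞) ≠ 0 := by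
      simp only [ne_eq, Nat.cast_eq_zero]
      omega
    rw [ENNReal.lt_div_iff_mul_lt (Or.inl hx0') (Or.inl (ENNReal.natCast_ne_top x))]
    calc (K : ℝ≥0∞) * (x : ℝ≥0∞) = ((K * x : ℕ) : ℝ≥0∞) := by rw [Nat.cast_mul]
      _ < (m x : ℝ≥0∞) := by exact_mod_cast hmlow
  · -- positive speed
    rw [← ENNReal.ofReal_inv_of_pos hv0]
    have hratio : Tendsto (fun n : ℕ => (n : ℝ) / (X n : ℝ)) atTop (nhds v⁻¹) := by
      have h1 := hvel.inv₀ (ne_of_gt hv0)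
      refine h1.congr fun n => ?_
      rw [inv_div]
    have hdto : Tendsto (fun x : ℕ => (d : ℝ) / x) atTop (nhds 0) :=
      tendsto_const_div_atTop_nhds_zero_nat (d : ℝ)
    have h1to : Tendsto (fun x : ℕ => (1 : ℝ) / x) atTop (nhds 0) :=
      tendsto_const_div_atTop_nhds_zero_nat 1
    have hlo : Tendsto (fun x : ℕ => (Hz x : ℝ) / (X (Hz x) : ℝ) - d / x) atTop (nhds v⁻¹) := by
      have h2 := (hratio.comp hHztop).sub hdto
      simpa using h2
    have hup : Tendsto (fun x : ℕ => (Mx x : ℝ) / (X (Mx x) : ℝ) + 1 / x) atTop (nhds v⁻¹) := by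
      have h2 := (hratio.comp hMtop).add h1to
      simpa using h2
    obtain ⟨N₂, hN₂⟩ := eventually_atTop.mp (hX.eventually (eventually_ge_atTop 1))
    have hreal : Tendsto (fun x : ℕ => (m x : ℝ) / x) atTop (nhds v⁻¹) := by
      refine tendsto_of_tendsto_of_tendsto_of_le_of_le' hlo hup ?_ ?_
      · filter_upwards [eventually_ge_atTop 1] with x hx1
        have hx0 : (0 : ℝ) < x := by exact_mod_cast hx1
        have hXH : (x : ℝ) < (X (Hz x) : ℝ) := by exact_mod_cast hHzmem x
        have e1 : (Hz x : ℝ) / (X (Hz x) : ℝ) ≤ (Hz x : ℝ) / x :=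
          div_le_div_of_nonneg_left (Nat.cast_nonneg _) hx0 hXH.le
        have e2 : (Hz x : ℝ) - d ≤ m x := by
          have h3 : (Hz x : ℝ) ≤ (m x : ℝ) + d := by exact_mod_cast hlow x
          linarith
        calc (Hz x : ℝ) / (X (Hz x) : ℝ) - d / x ≤ (Hz x : ℝ) / x - d / x := by linarith
          _ = ((Hz x : ℝ) - d) / x := by ring
          _ ≤ (m x : ℝ) / x := (div_le_div_iff_of_pos_right hx0).mpr e2
      · filter_upwards [eventually_ge_atTop x₁, hMtop.eventually (eventually_ge_atTop N₂),
          eventually_ge_atTop 1] with x hxx₁ hxM hx1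
        have hx0 : (0 : ℝ) < x := by exact_mod_cast hx1
        have hXM : (0 : ℝ) < (X (Mx x) : ℝ) := by
          have h3 : (1 : ℤ) ≤ X (Mx x) := hN₂ (Mx x) hxM
          exact_mod_cast lt_of_lt_of_le zero_lt_one h3
        have hXMx : (X (Mx x) : ℝ) ≤ x := by exact_mod_cast hMmem x hxx₁
        have e1 : (Mx x : ℝ) / x ≤ (Mx x : ℝ) / (X (Mx x) : ℝ) :=
          div_le_div_of_nonneg_left (Nat.cast_nonneg _) hXM hXMx
        have e2 : (m x : ℝ) ≤ (Mx x : ℝ) + 1 := by exact_mod_cast hupcard x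
        calc (m x : ℝ) / x ≤ ((Mx x : ℝ) + 1) / x := (div_le_div_iff_of_pos_right hx0).mpr e2
          _ = (Mx x : ℝ) / x + 1 / x := by ring
          _ ≤ (Mx x : ℝ) / (X (Mx x) : ℝ) + 1 / x := by linarith
    have hof : Tendsto (fun x : ℕ => ENNReal.ofReal ((m x : ℝ) / x)) atTop
        (nhds (ENNReal.ofReal v⁻¹)) := (ENNReal.continuous_ofReal.tendsto _).comp hreal
    refine hof.congr' ?_
    filter_upwards [eventually_ge_atTop 1] with x hx1
    have hx0 : (0 : ℝ) < x := by exact_mod_cast hx1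
    rw [ENNReal.ofReal_div_of_pos hx0, ENNReal.ofReal_natCast, ENNReal.ofReal_natCast]

/-! ### The relevant measurable events and their shift invariance -/

def tendSet : Set (ℕ → ℤ) := {X | Tendsto X atTop atTop}

def velSet (v : ℝ) : Set (ℕ → ℤ) :=
  {X | Tendsto (fun n : ℕ => (X n : ℝ) / (n : ℝ)) atTop (nhds v)}

lemma measurableSet_tendSet : MeasurableSet tendSet := by
  have h : tendSet = ⋂ (M : ℤ), ⋃ (N : ℕ), ⋂ (n : ℕ), ⋂ (_ : N ≤ n),
      (fun X : ℕ → ℤ => X n) ⁻¹' {z : ℤ | M ≤ z} := by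
    ext X
    simp only [tendSet, Set.mem_setOf_eq, Set.mem_iInter, Set.mem_iUnion, Set.mem_preimage,
      tendsto_atTop_atTop]
  rw [h]
  exact MeasurableSet.iInter fun M => MeasurableSet.iUnion fun N =>
    MeasurableSet.iInter fun n => MeasurableSet.iInter fun _ =>
      (measurable_pi_apply n) (measurableSet_int _)

lemma measurableSet_velSet (v : ℝ) : MeasurableSet (velSet v) := by
  have h : velSet v = ⋂ (k : ℕ), ⋃ (N : ℕ), ⋂ (n : ℕ), ⋂ (_ : N ≤ n),
      (fun X : ℕ → ℤ => X n) ⁻¹' {z : ℤ | |(z : ℝ) / (n : ℝ) - v| < 1 / ((k : ℝ) + 1)} := by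
    ext X
    simp only [velSet, Set.mem_setOf_eq, Set.mem_iInter, Set.mem_iUnion, Set.mem_preimage,
      Metric.tendsto_atTop, Real.dist_eq]
    constructor
    · intro h k
      obtain ⟨N, hN⟩ := h (1 / ((k : ℝ) + 1)) (by positivity)
      exact ⟨N, fun n hn => hN n hn⟩
    · intro h ε hε
      obtain ⟨k, hk⟩ := exists_nat_one_div_lt hε
      obtain ⟨N, hN⟩ := h k
      exact ⟨N, fun n hn => lt_trans (hN n hn) hk⟩
  rw [h]
  exact MeasurableSet.iInter fun k => MeasurableSet.iUnion fun N =>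
    MeasurableSet.iInter fun n => MeasurableSet.iInter fun _ =>
      (measurable_pi_apply n) (measurableSet_int _)

lemma shiftPath_preimage_tendSet (a : ℤ) : shiftPath a ⁻¹' tendSet = tendSet := by
  ext X
  simp only [Set.mem_preimage, tendSet, Set.mem_setOf_eq]
  constructor
  · intro h
    have h2 := tendsto_atTop_add_const_right atTop a h
    refine h2.congr fun n => ?_
    simp [shiftPath]
  · intro h
    have h2 := tendsto_atTop_add_const_right atTop (-a) h
    refine h2.congr fun n => ?_
    simp [shiftPath, sub_eq_add_neg]

lemma shiftPath_preimage_velSet (a : ℤ) (v : ℝ) : shiftPath a ⁻¹' velSet v = velSet v := by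
  ext X
  simp only [Set.mem_preimage, velSet, Set.mem_setOf_eq, shiftPath]
  have hconst : Tendsto (fun n : ℕ => (a : ℝ) / n) atTop (nhds 0) :=
    tendsto_const_div_atTop_nhds_zero_nat (a : ℝ)
  constructor
  · intro h
    have h2 := h.add hconst
    rw [add_zero] at h2
    refine h2.congr fun n => ?_
    push_cast
    ring
  · intro h
    have h2 := h.sub hconst
    rw [sub_zero] at h2
    refine h2.congr fun n => ?_
    push_cast
    ring

end OccLLN

noncomputable section

/-- Under (C1)–(C4), for any integers a and c, ℙ^a-a.s.
(1/x) Σ_{k=c}^x N_k → 1/v as x → ∞ (the limit being ∞ if v = 0). -/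
theorem occupation_time_lln
    (L R : ℕ) (hL : 1 ≤ L) (hR : 1 ≤ R)
    (P : Measure Env)
    (Pq : Env → ℤ → Measure (ℕ → ℤ)) (hPq : IsQuenchedFamily Pq)
    (hC1 : CondIID P) (hC2 : CondIrred P) (hC3 : CondBdd L R P)
    (hC4 : CondTrans P Pq)
    (v : ℝ) (hv : ASLimVelocity P Pq v) (a c : ℤ) :
    ∫⁻ ω, (Pq ω a) {X | ¬ Tendsto
        (fun x : ℕ => (∑ k ∈ Finset.Icc c (x : ℤ), Ncount k X) / (x : ℝ≥0∞)) atTop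
        (nhds (ENNReal.ofReal v)⁻¹)} ∂P = 0 := by
  classical
  obtain ⟨hprob, hEnvae, hind, hmarg⟩ := hC1
  haveI := hprob
  have hC1' : CondIID P := ⟨hprob, hEnvae, hind, hmarg⟩
  have hmp : ∀ b : ℤ, MeasurePreserving (OccLLN.shiftEnv b) P P :=
    fun b => ⟨OccLLN.measurable_shiftEnv b, OccLLN.mapShiftEnv hC1' b⟩
  have hC4' : ∀ᵐ ω ∂P, (Pq (OccLLN.shiftEnv a ω) 0) {X | Tendsto X atTop atTop} = 1 :=
    (hmp a).quasiMeasurePreserving.ae hC4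
  have hbound : ∀ᵐ ω ∂P,
      (Pq ω a) {X | ¬ Tendsto
        (fun x : ℕ => (∑ k ∈ Finset.Icc c (x : ℤ), Ncount k X) / (x : ℝ≥0∞)) atTop
        (nhds (ENNReal.ofReal v)⁻¹)}
      ≤ (Pq (OccLLN.shiftEnv a ω) 0) (OccLLN.velSet v)ᶜ := by
    filter_upwards [hEnvae, hC4'] with ω hEnv hT
    have hshift := OccLLN.quenched_shift hPq hEnv a
    haveI : IsProbabilityMeasure (Pq (OccLLN.shiftEnv a ω) 0) :=
      (hPq (OccLLN.shiftEnv a ω) (OccLLN.isEnv_shiftEnv hEnv a) 0).1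
    have hsub : {X : ℕ → ℤ | ¬ Tendsto
        (fun x : ℕ => (∑ k ∈ Finset.Icc c (x : ℤ), Ncount k X) / (x : ℝ≥0∞)) atTop
        (nhds (ENNReal.ofReal v)⁻¹)} ⊆ OccLLN.tendSetᶜ ∪ (OccLLN.velSet v)ᶜ := by
      intro X hXmem
      by_contra hcon
      rw [Set.mem_union, not_or] at hcon
      obtain ⟨h1, h2⟩ := hcon
      rw [Set.notMem_compl_iff] at h1 h2
      exact hXmem (OccLLN.pathwise c v X h1 h2)
    have hmap2 : (Pq ω a) OccLLN.tendSetᶜ = 0 := by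
      have e1 : (Pq ω a) OccLLN.tendSetᶜ
          = ((Pq ω a).map (OccLLN.shiftPath a)) OccLLN.tendSetᶜ := by
        rw [Measure.map_apply (OccLLN.measurable_shiftPath a)
          OccLLN.measurableSet_tendSet.compl, Set.preimage_compl,
          OccLLN.shiftPath_preimage_tendSet]
      rw [e1, hshift, measure_compl OccLLN.measurableSet_tendSet (measure_ne_top _ _)]
      rw [show (Pq (OccLLN.shiftEnv a ω) 0) OccLLN.tendSet = 1 from hT]
      simp
    have hmap3 : (Pq ω a) (OccLLN.velSet v)ᶜ
        = (Pq (OccLLN.shiftEnv a ω) 0) (OccLLN.velSet v)ᶜ := by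
      rw [← hshift, Measure.map_apply (OccLLN.measurable_shiftPath a)
        (OccLLN.measurableSet_velSet v).compl, Set.preimage_compl,
        OccLLN.shiftPath_preimage_velSet]
    refine le_trans (measure_mono hsub) (le_trans (measure_union_le _ _) ?_)
    rw [hmap2, hmap3, zero_add]
  refine le_antisymm ?_ (by simp)
  refine le_trans (lintegral_mono_ae hbound) ?_
  have e2 : ∫⁻ ω, (Pq (OccLLN.shiftEnv a ω) 0) (OccLLN.velSet v)ᶜ ∂P
      = ∫⁻ ω, (Pq (OccLLN.shiftEnv a ω) 0) (OccLLN.velSet v)ᶜ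
        ∂(P.map (OccLLN.shiftEnv (-a))) := by
    rw [OccLLN.mapShiftEnv hC1' (-a)]
  rw [e2]
  refine le_trans (lintegral_map_le
    (fun ω => (Pq (OccLLN.shiftEnv a ω) 0) (OccLLN.velSet v)ᶜ)
    (OccLLN.shiftEnv (-a))) ?_
  have e3 : ∫⁻ ω, (Pq (OccLLN.shiftEnv a (OccLLN.shiftEnv (-a) ω)) 0) (OccLLN.velSet v)ᶜ ∂P
      = ∫⁻ ω, (Pq ω 0) (OccLLN.velSet v)ᶜ ∂P := by
    refine lintegral_congr fun ω => ?_
    rw [OccLLN.shiftEnv_shiftEnv]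
  rw [e3]
  have e4 : (OccLLN.velSet v)ᶜ
      = {X : ℕ → ℤ | ¬ Tendsto (fun n : ℕ => (X n : ℝ) / (n : ℝ)) atTop (nhds v)} := by
    rw [OccLLN.velSet, Set.compl_setOf]
  rw [e4, hv]

end
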